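/- If some restart distribution is beneficial, then some sharp (deterministic) restart is beneficial. Precisely: if there exists R : ℕ → ℝ monotone non-decreasing with 0 ≤ R(n) ≤ 1 for all n and R(n) → 1 as n → ∞ such that ∑'_{n} (1 − U(n) − u(n)·μ)·(1 − R(n)) < 0, then there exists N ≥ 1 such that ∑_{n=0}^{N−1} (1 − U(n) − u(n)·μ) < 0, i.e., S(N−1) < 0, which means sharp restart at time N is beneficial. -/
import Mathlib


theorem beneficial_implies_sharp_beneficial
    (u : ℕ → ℝ) (hu0 : ∀ n, 0 ≤ u n) (hu1 : ∑' n, u n = 1)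
    (hmean : Summable (fun n : ℕ => (n : ℝ) * u n))
    (μ : ℝ) (hμ : μ = ∑' n : ℕ, (n : ℝ) * u n)
    (U : ℕ → ℝ)
    (hU : ∀ n, U n = ∑ k ∈ Finset.range (n + 1), u k)
    (hR : ∃ R : ℕ → ℝ, Monotone R ∧ (∀ n, 0 ≤ R n ∧ R n ≤ 1) ∧
        Filter.Tendsto R Filter.atTop (nhds 1) ∧
        ∑' n, (1 - U n - u n * μ) * (1 - R n) < 0) :
    ∃ N : ℕ, 1 ≤ N ∧ ∑ n ∈ Finset.range N, (1 - U n - u n * μ) < 0 := by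
  obtain ⟨R, hmono, hbd, _, hneg⟩ := hR
  set a : ℕ → ℝ := fun n => 1 - U n - u n * μ with ha
  by_contra hcon
  push_neg at hcon
  have hS : ∀ N, 0 ≤ ∑ n ∈ Finset.range N, a n := by
    intro N
    cases N with
    | zero => simp
    | succ n => exact hcon _ (Nat.succ_le_succ (Nat.zero_le _))
  set f : ℕ → ℝ := fun n => a n * (1 - R n) with hf
  have hsumm : Summable f := by
    by_contra h
    rw [show (∑' n, (1 - U n - u n * μ) * (1 - R n)) = ∑' n, f n from rfl,
      tsum_eq_zero_of_not_summable h] at hneg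
    exact lt_irrefl 0 hneg
  have hpart : ∀ N, 0 ≤ ∑ n ∈ Finset.range N, f n := by
    intro N
    have heq : ∑ n ∈ Finset.range N, f n
        = ∑ i ∈ Finset.range N, (fun n => 1 - R n) i • a i := by
      simp [hf, smul_eq_mul, mul_comm]
    rw [heq, Finset.sum_range_by_parts]
    have h1 : 0 ≤ (1 - R (N - 1)) * ∑ i ∈ Finset.range N, a i :=
      mul_nonneg (by linarith [(hbd (N - 1)).2]) (hS N)
    have h2 : ∑ i ∈ Finset.range (N - 1),
        ((1 - R (i + 1)) - (1 - R i)) • ∑ j ∈ Finset.range (i + 1), a j ≤ 0 := by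
      apply Finset.sum_nonpos
      intro i _
      have hm : R i ≤ R (i + 1) := hmono (Nat.le_succ i)
      rw [smul_eq_mul]
      exact mul_nonpos_of_nonpos_of_nonneg (by linarith) (hS (i + 1))
    simp only [smul_eq_mul] at *
    linarith
  have htend := hsumm.hasSum.tendsto_sum_nat
  have h0 : (0 : ℝ) ≤ ∑' n, f n := ge_of_tendsto' htend hpart
  have : (∑' n, (1 - U n - u n * μ) * (1 - R n)) = ∑' n, f n := rfl
  linarith
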